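/- arXiv:2411.00367 — 3 statements merged into one kernel-verified Lean document; each statement's English description precedes it below -/
import Mathlib

section
/- Let X₁ ⊆ X₀ and Y₁ ⊆ Y₀ be normed spaces, 0 < α ≤ 1, β > 0 with β ≥ α, and let T : X₀ → Y₀ satisfy ‖Ta − Tb‖_{Y₀} ≤ f(‖a‖_{X₀}, ‖b‖_{X₀}) ‖a − b‖_{X₀}^α for all a,b ∈ X₀ and ‖Ta‖_{Y₁} ≤ g(‖a‖_{X₀}) ‖a‖_{X₁}^β for all a ∈ X₁, where g is continuous increasing on ℝ₊ and f is continuous on ℝ₊² and increasing in each variable. Set G(σ) = max{g(2σ), f(σ, 2σ)}. Then for every a ∈ X₀ and t > 0, K(Ta, t^β; Y₀, Y₁) ≤ G(‖a‖_{X₀}) (1 + ‖a‖_{X₀}^{β−α}) [K(a, t; X₀, X₁)]^α. -/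
open Real

/-- The Peetre K-functional for the couple `(X₀, X₁)`, where `X₁` is embedded
in `X₀` via the additive map `j`. -/
noncomputable def Kfunc {X₀ X₁ : Type*} [NormedAddCommGroup X₀] [NormedAddCommGroup X₁]
    (j : X₁ →+ X₀) (a : X₀) (t : ℝ) : ℝ :=
  sInf {r : ℝ | ∃ a₁ : X₁, r = ‖a - j a₁‖ + t * ‖a₁‖}

/-- Tartar-type estimate on the K-functional of `T a`: if `T` satisfies
`‖Ta - Tb‖_{Y₀} ≤ f(‖a‖,‖b‖)‖a-b‖^α` and `‖Ta‖_{Y₁} ≤ g(‖a‖_{X₀})‖a‖_{X₁}^β`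
with `β ≥ α`, then `K(Ta, t^β) ≤ G(‖a‖)(1+‖a‖^{β-α}) K(a,t)^α`,
where `G(σ) = max (g (2σ)) (f σ (2σ))`. -/
theorem Kfunc_estimate_of_holder
    {X₀ X₁ Y₀ Y₁ : Type*}
    [NormedAddCommGroup X₀] [NormedAddCommGroup X₁]
    [NormedAddCommGroup Y₀] [NormedAddCommGroup Y₁]
    (jX : X₁ →+ X₀) (jY : Y₁ →+ Y₀)
    (α β : ℝ) (hα0 : 0 < α) (hα1 : α ≤ 1) (hβ : 0 < β) (hβα : α ≤ β)
    (T₀ : X₀ → Y₀) (T₁ : X₁ → Y₁)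
    (hcompat : ∀ a : X₁, jY (T₁ a) = T₀ (jX a))
    (f : ℝ → ℝ → ℝ) (g : ℝ → ℝ)
    (hg_cont : Continuous g) (hg_mono : Monotone g)
    (hf_cont : Continuous (fun σ : ℝ × ℝ => f σ.1 σ.2))
    (hf_mono : ∀ σ : ℝ, Monotone (f σ)) (hf_mono' : ∀ τ : ℝ, Monotone (fun σ => f σ τ))
    (h1 : ∀ a b : X₀, ‖T₀ a - T₀ b‖ ≤ f ‖a‖ ‖b‖ * ‖a - b‖ ^ α)
    (h2 : ∀ a : X₁, ‖T₁ a‖ ≤ g ‖jX a‖ * ‖a‖ ^ β)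
    (G : ℝ → ℝ) (hG : ∀ σ, G σ = max (g (2 * σ)) (f σ (2 * σ))) :
    ∀ (a : X₀) (t : ℝ), 0 < t →
      Kfunc jY (T₀ a) (t ^ β) ≤
        G ‖a‖ * (1 + ‖a‖ ^ (β - α)) * (Kfunc jX a t) ^ α := by
  intro a t ht
  set σ : ℝ := ‖a‖ with hσdef
  set S : Set ℝ := {r : ℝ | ∃ a₁ : X₁, r = ‖a - jX a₁‖ + t * ‖a₁‖} with hSdef
  set SY : Set ℝ := {r : ℝ | ∃ b₁ : Y₁, r = ‖T₀ a - jY b₁‖ + t ^ β * ‖b₁‖} with hSYdef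
  have hKS : Kfunc jX a t = sInf S := rfl
  have hLS : Kfunc jY (T₀ a) (t ^ β) = sInf SY := rfl
  have hSne : S.Nonempty := ⟨‖a - jX 0‖ + t * ‖(0 : X₁)‖, 0, rfl⟩
  have hSbdd : BddBelow S := by
    refine ⟨0, ?_⟩
    rintro r ⟨a₁, rfl⟩
    positivity
  have hSYbdd : BddBelow SY := by
    refine ⟨0, ?_⟩
    rintro r ⟨b₁, rfl⟩
    have : (0:ℝ) ≤ t ^ β := Real.rpow_nonneg ht.le β
    positivity
  have hK0 : 0 ≤ Kfunc jX a t := by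
    rw [hKS]
    refine le_csInf hSne ?_
    rintro r ⟨a₁, rfl⟩
    positivity
  have hKσ : Kfunc jX a t ≤ σ := by
    rw [hKS]
    have : σ ∈ S := ⟨0, by simp [hσdef]⟩
    exact csInf_le hSbdd this
  set K : ℝ := Kfunc jX a t with hKdef
  by_cases ha : a = 0
  · -- degenerate case a = 0
    subst ha
    have hT10 : ‖T₁ 0‖ = 0 := by
      have h20 := h2 0
      simp only [map_zero, norm_zero, Real.zero_rpow hβ.ne', mul_zero] at h20
      exact le_antisymm h20 (norm_nonneg _)
    have hT10' : T₁ 0 = 0 := norm_eq_zero.mp hT10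
    have hT00 : T₀ 0 = 0 := by
      have := hcompat 0
      simp [hT10'] at this
      exact this.symm
    have hKzero : K = 0 := by
      refine le_antisymm ?_ hK0
      have h0 : (0:ℝ) ∈ S := ⟨0, by simp⟩
      exact le_trans (le_of_eq hKS) (csInf_le hSbdd h0)
    have hL0 : Kfunc jY (T₀ 0) (t ^ β) ≤ 0 := by
      rw [hLS]
      have h0 : (0:ℝ) ∈ SY := ⟨0, by simp [hT00]⟩
      exact csInf_le hSYbdd h0
    calc Kfunc jY (T₀ 0) (t ^ β) ≤ 0 := hL0
      _ = G σ * (1 + σ ^ (β - α)) * K ^ α := by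
          rw [hKzero, Real.zero_rpow hα0.ne', mul_zero]
  · -- main case
    have hσpos : 0 < σ := norm_pos_iff.mpr ha
    -- nonnegativity of f σ on nonneg second arguments
    have hf0 : 0 ≤ f σ 0 := by
      have h := h1 a 0
      simp only [norm_zero, sub_zero] at h
      have hσα : 0 < σ ^ α := Real.rpow_pos_of_pos hσpos α
      by_contra hneg
      push_neg at hneg
      nlinarith [norm_nonneg (T₀ a - T₀ 0)]
    set Φ : ℝ → ℝ := fun ε =>
      max (g (2 * σ + 2 * ε)) (f σ (2 * σ + 2 * ε)) * (1 + (σ + ε) ^ (β - α)) * (K + ε) ^ α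
      with hΦdef
    have step1 : ∀ ε : ℝ, 0 < ε → Kfunc jY (T₀ a) (t ^ β) ≤ Φ ε := by
      intro ε hε
      obtain ⟨r, hrS, hrlt⟩ := exists_lt_of_csInf_lt hSne
        (show sInf S < K + ε by rw [← hKS]; linarith)
      obtain ⟨a₁, rfl⟩ := hrS
      set M : ℝ := max (g (2 * σ + 2 * ε)) (f σ (2 * σ + 2 * ε)) with hMdef
      have ha₀d : ‖a - jX a₁‖ ≤ K + ε := by
        have : (0:ℝ) ≤ t * ‖a₁‖ := by positivity
        linarith
      have ha₁d : t * ‖a₁‖ ≤ K + ε := by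
        have : (0:ℝ) ≤ ‖a - jX a₁‖ := norm_nonneg _
        linarith
      have hja₁ : ‖jX a₁‖ ≤ 2 * σ + 2 * ε := by
        have h1' : ‖jX a₁‖ ≤ ‖a‖ + ‖a - jX a₁‖ := by
          calc ‖jX a₁‖ = ‖a - (a - jX a₁)‖ := by rw [sub_sub_cancel]
            _ ≤ ‖a‖ + ‖a - jX a₁‖ := norm_sub_le _ _
        have := hKσ
        linarith
      have hM0 : 0 ≤ M := by
        have : f σ 0 ≤ f σ (2 * σ + 2 * ε) := hf_mono σ (by positivity)
        have := le_max_right (g (2 * σ + 2 * ε)) (f σ (2 * σ + 2 * ε))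
        linarith
      have hKεpos : 0 < K + ε := by linarith
      -- the decomposition of T₀ a
      have hL : Kfunc jY (T₀ a) (t ^ β) ≤ ‖T₀ a - T₀ (jX a₁)‖ + t ^ β * ‖T₁ a₁‖ := by
        rw [hLS]
        refine csInf_le hSYbdd ⟨T₁ a₁, ?_⟩
        rw [hcompat]
      -- term 1
      have hterm1 : ‖T₀ a - T₀ (jX a₁)‖ ≤ M * (K + ε) ^ α := by
        have hfle : f σ ‖jX a₁‖ ≤ M :=
          le_trans (hf_mono σ hja₁) (le_max_right _ _)
        calc ‖T₀ a - T₀ (jX a₁)‖ ≤ f σ ‖jX a₁‖ * ‖a - jX a₁‖ ^ α := h1 a (jX a₁)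
          _ ≤ M * ‖a - jX a₁‖ ^ α :=
              mul_le_mul_of_nonneg_right hfle (Real.rpow_nonneg (norm_nonneg _) α)
          _ ≤ M * (K + ε) ^ α :=
              mul_le_mul_of_nonneg_left
                (Real.rpow_le_rpow (norm_nonneg _) ha₀d hα0.le) hM0
      -- term 2
      have hterm2 : t ^ β * ‖T₁ a₁‖ ≤ M * (K + ε) ^ β := by
        have hgle : g ‖jX a₁‖ ≤ M := le_trans (hg_mono hja₁) (le_max_left _ _)
        have htβ : (0:ℝ) ≤ t ^ β := Real.rpow_nonneg ht.le β
        calc t ^ β * ‖T₁ a₁‖ ≤ t ^ β * (g ‖jX a₁‖ * ‖a₁‖ ^ β) :=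
              mul_le_mul_of_nonneg_left (h2 a₁) htβ
          _ = g ‖jX a₁‖ * (t * ‖a₁‖) ^ β := by
              rw [Real.mul_rpow ht.le (norm_nonneg _)]; ring
          _ ≤ M * (t * ‖a₁‖) ^ β :=
              mul_le_mul_of_nonneg_right hgle
                (Real.rpow_nonneg (by positivity) β)
          _ ≤ M * (K + ε) ^ β :=
              mul_le_mul_of_nonneg_left
                (Real.rpow_le_rpow (by positivity) ha₁d hβ.le) hM0
      -- put it together
      have hsplit : (K + ε) ^ β = (K + ε) ^ (β - α) * (K + ε) ^ α := by
        rw [← Real.rpow_add hKεpos]; ring_nf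
      have hKσε : (K + ε) ^ (β - α) ≤ (σ + ε) ^ (β - α) :=
        Real.rpow_le_rpow hKεpos.le (by linarith) (by linarith)
      have hKεα : (0:ℝ) ≤ (K + ε) ^ α := Real.rpow_nonneg hKεpos.le α
      have : M * (K + ε) ^ β ≤ M * (σ + ε) ^ (β - α) * (K + ε) ^ α := by
        rw [hsplit, ← mul_assoc]
        exact mul_le_mul_of_nonneg_right
          (mul_le_mul_of_nonneg_left hKσε hM0) hKεα
      calc Kfunc jY (T₀ a) (t ^ β)
          ≤ ‖T₀ a - T₀ (jX a₁)‖ + t ^ β * ‖T₁ a₁‖ := hL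
        _ ≤ M * (K + ε) ^ α + M * (σ + ε) ^ (β - α) * (K + ε) ^ α := by linarith
        _ = Φ ε := by rw [hΦdef]; ring
    -- limit as ε → 0⁺
    have hΦcont : ContinuousAt Φ 0 := by
      have hm : ContinuousAt (fun ε : ℝ =>
          max (g (2 * σ + 2 * ε)) (f σ (2 * σ + 2 * ε))) 0 := by
        have c1 : Continuous fun ε : ℝ => g (2 * σ + 2 * ε) :=
          hg_cont.comp (by continuity)
        have c2 : Continuous fun ε : ℝ => f σ (2 * σ + 2 * ε) :=
          hf_cont.comp (by continuity : Continuous fun ε : ℝ => ((σ, 2 * σ + 2 * ε) : ℝ × ℝ))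
        exact (c1.max c2).continuousAt
      have hp : ContinuousAt (fun ε : ℝ => (σ + ε) ^ (β - α)) 0 :=
        ContinuousAt.rpow_const ((continuous_const.add continuous_id).continuousAt)
          (Or.inr (by linarith))
      have hq : ContinuousAt (fun ε : ℝ => (K + ε) ^ α) 0 :=
        ContinuousAt.rpow_const ((continuous_const.add continuous_id).continuousAt)
          (Or.inr hα0.le)
      exact (hm.mul ((continuousAt_const).add hp)).mul hq
    have hΦ0 : Φ 0 = G σ * (1 + σ ^ (β - α)) * K ^ α := by
      rw [hΦdef, hG σ]
      norm_num
    have htend : Filter.Tendsto Φ (nhdsWithin 0 (Set.Ioi 0))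
        (nhds (G σ * (1 + σ ^ (β - α)) * K ^ α)) := by
      rw [← hΦ0]
      exact hΦcont.continuousWithinAt.tendsto
    refine ge_of_tendsto htend ?_
    filter_upwards [self_mem_nhdsWithin] with ε hε
    exact step1 ε hε
end

section
/- Let X₁ ⊆ X₀ and Y₁ ⊆ Y₀ be normed spaces, 0 < α ≤ 1, β > 0. Suppose T : X₀ → Y₀ is globally α-Hölderian with constant M₀, i.e. ‖Ta − Tb‖_{Y₀} ≤ M₀‖a − b‖_{X₀}^α for all a, b ∈ X₀, and T maps X₁ into Y₁ with ‖Ta‖_{Y₁} ≤ M₁‖a‖_{X₁}^β. Then for all a ∈ X₀ and all t > 0, K(Ta, t^β; Y₀, Y₁) ≤ max(M₀, M₁) ([K(a, t; X₀, X₁)]^β + [K(a, t; X₀, X₁)]^α). -/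
open Real

/-- If `T` is globally α-Hölderian from `X₀` to `Y₀` with constant `M₀` and maps
`X₁` into `Y₁` with `‖Ta‖_{Y₁} ≤ M₁ ‖a‖_{X₁}^β`, then
`K(Ta, t^β; Y₀, Y₁) ≤ max(M₀,M₁) (K(a,t)^β + K(a,t)^α)`. -/
theorem Kfunc_estimate_holder_bounded
    {X₀ X₁ Y₀ Y₁ : Type*}
    [NormedAddCommGroup X₀] [NormedAddCommGroup X₁]
    [NormedAddCommGroup Y₀] [NormedAddCommGroup Y₁]
    (jX : X₁ →+ X₀) (jY : Y₁ →+ Y₀)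
    (α β : ℝ) (hα0 : 0 < α) (hα1 : α ≤ 1) (hβ : 0 < β)
    (T₀ : X₀ → Y₀) (T₁ : X₁ → Y₁)
    (hcompat : ∀ a : X₁, jY (T₁ a) = T₀ (jX a))
    (M₀ M₁ : ℝ)
    (h0 : ∀ a b : X₀, ‖T₀ a - T₀ b‖ ≤ M₀ * ‖a - b‖ ^ α)
    (h1 : ∀ a : X₁, ‖T₁ a‖ ≤ M₁ * ‖a‖ ^ β) :
    ∀ (a : X₀) (t : ℝ), 0 < t →
      Kfunc jY (T₀ a) (t ^ β) ≤
        max M₀ M₁ * ((Kfunc jX a t) ^ β + (Kfunc jX a t) ^ α) := by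
  intro a t ht
  set C := max M₀ M₁ with hC
  set S : Set ℝ := {r : ℝ | ∃ a₁ : X₁, r = ‖a - jX a₁‖ + t * ‖a₁‖} with hSdef
  have hKX : Kfunc jX a t = sInf S := rfl
  have hSne : S.Nonempty := ⟨‖a - jX 0‖ + t * ‖(0 : X₁)‖, 0, rfl⟩
  have hSnn : ∀ r ∈ S, (0 : ℝ) ≤ r := by
    rintro r ⟨a₁, rfl⟩
    positivity
  have hSbdd : BddBelow S := ⟨0, fun r hr => hSnn r hr⟩
  have hKnn : 0 ≤ Kfunc jX a t := by
    rw [hKX]; exact le_csInf hSne hSnn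
  have hYle : ∀ b₁ : Y₁, Kfunc jY (T₀ a) (t ^ β) ≤ ‖T₀ a - jY b₁‖ + t ^ β * ‖b₁‖ := by
    intro b₁
    apply csInf_le
    · refine ⟨0, ?_⟩
      rintro r ⟨c, rfl⟩
      have : (0 : ℝ) ≤ t ^ β := rpow_nonneg ht.le β
      positivity
    · exact ⟨b₁, rfl⟩
  by_cases hCnn : 0 ≤ C
  · -- main case
    have key : ∀ s : ℝ, Kfunc jX a t < s →
        Kfunc jY (T₀ a) (t ^ β) ≤ C * (s ^ β + s ^ α) := by
      intro s hs
      rw [hKX] at hs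
      obtain ⟨r, hrS, hrs⟩ := exists_lt_of_csInf_lt hSne hs
      obtain ⟨a₁, rfl⟩ := hrS
      have hx : (0 : ℝ) ≤ ‖a - jX a₁‖ := norm_nonneg _
      have hta : (0 : ℝ) ≤ t * ‖a₁‖ := by positivity
      have hxs : ‖a - jX a₁‖ ≤ s := by linarith
      have htas : t * ‖a₁‖ ≤ s := by linarith
      have hs0 : (0 : ℝ) ≤ s := le_trans hta htas
      have hbound1 : ‖T₀ a - jY (T₁ a₁)‖ ≤ C * s ^ α := by
        rw [hcompat]
        calc ‖T₀ a - T₀ (jX a₁)‖ ≤ M₀ * ‖a - jX a₁‖ ^ α := h0 a (jX a₁)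
          _ ≤ C * ‖a - jX a₁‖ ^ α :=
              mul_le_mul_of_nonneg_right (le_max_left _ _) (rpow_nonneg hx α)
          _ ≤ C * s ^ α :=
              mul_le_mul_of_nonneg_left (rpow_le_rpow hx hxs hα0.le) hCnn
      have hbound2 : t ^ β * ‖T₁ a₁‖ ≤ C * s ^ β := by
        have h1' : ‖T₁ a₁‖ ≤ M₁ * ‖a₁‖ ^ β := h1 a₁
        have htb : (0 : ℝ) ≤ t ^ β := rpow_nonneg ht.le β
        calc t ^ β * ‖T₁ a₁‖ ≤ t ^ β * (M₁ * ‖a₁‖ ^ β) :=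
              mul_le_mul_of_nonneg_left h1' htb
          _ = M₁ * (t ^ β * ‖a₁‖ ^ β) := by ring
          _ = M₁ * (t * ‖a₁‖) ^ β := by rw [mul_rpow ht.le (norm_nonneg _)]
          _ ≤ C * (t * ‖a₁‖) ^ β :=
              mul_le_mul_of_nonneg_right (le_max_right _ _) (rpow_nonneg hta β)
          _ ≤ C * s ^ β :=
              mul_le_mul_of_nonneg_left (rpow_le_rpow hta htas hβ.le) hCnn
      calc Kfunc jY (T₀ a) (t ^ β) ≤ ‖T₀ a - jY (T₁ a₁)‖ + t ^ β * ‖T₁ a₁‖ := hYle _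
        _ ≤ C * s ^ α + C * s ^ β := add_le_add hbound1 hbound2
        _ = C * (s ^ β + s ^ α) := by ring
    -- pass to the limit s → K⁺
    set K := Kfunc jX a t with hK
    have hcont : ContinuousAt (fun s : ℝ => C * (s ^ β + s ^ α)) K := by
      have hβc : ContinuousAt (fun s : ℝ => s ^ β) K :=
        Real.continuousAt_rpow_const K β (Or.inr hβ.le)
      have hαc : ContinuousAt (fun s : ℝ => s ^ α) K :=
        Real.continuousAt_rpow_const K α (Or.inr hα0.le)
      exact (continuousAt_const.mul (hβc.add hαc))
    have htend : Filter.Tendsto (fun s : ℝ => C * (s ^ β + s ^ α)) (nhdsWithin K (Set.Ioi K))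
        (nhds (C * (K ^ β + K ^ α))) :=
      hcont.continuousWithinAt.tendsto
    refine ge_of_tendsto htend ?_
    filter_upwards [self_mem_nhdsWithin] with s hs
    exact key s hs
  · -- degenerate case: both constants negative
    push_neg at hCnn
    have hM₀ : M₀ < 0 := (max_lt_iff.mp hCnn).1
    have hM₁ : M₁ < 0 := (max_lt_iff.mp hCnn).2
    have hT10 : ‖T₁ (0 : X₁)‖ = 0 := by
      have := h1 0
      rw [norm_zero, Real.zero_rpow hβ.ne', mul_zero] at this
      exact le_antisymm this (norm_nonneg _)
    have hnormA : ‖a - jX (0 : X₁)‖ = 0 := by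
      have h := h0 a (jX 0)
      have hnn : (0 : ℝ) ≤ M₀ * ‖a - jX 0‖ ^ α := le_trans (norm_nonneg _) h
      have hp : (0 : ℝ) ≤ ‖a - jX 0‖ ^ α := rpow_nonneg (norm_nonneg _) α
      have hz : ‖a - jX 0‖ ^ α = 0 := by nlinarith
      exact (Real.rpow_eq_zero (norm_nonneg _) hα0.ne').mp hz
    have hT0a : ‖T₀ a - T₀ (jX (0 : X₁))‖ = 0 := by
      have h := h0 a (jX 0)
      rw [hnormA, Real.zero_rpow hα0.ne', mul_zero] at h
      exact le_antisymm h (norm_nonneg _)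
    have hLHS : Kfunc jY (T₀ a) (t ^ β) ≤ 0 := by
      have := hYle (T₁ 0)
      rw [hcompat, hT0a, hT10, mul_zero, add_zero] at this
      exact this
    have hK0 : Kfunc jX a t = 0 := by
      refine le_antisymm ?_ hKnn
      rw [hKX]
      have h0S : (0 : ℝ) ∈ S := by
        refine ⟨0, ?_⟩
        rw [hnormA, norm_zero, mul_zero, add_zero]
      exact csInf_le hSbdd h0S
    rw [hK0, Real.zero_rpow hβ.ne', Real.zero_rpow hα0.ne', add_zero, mul_zero]
    exact hLHS
end

section
/- Let X₁ ⊆ X₀ and Y₁ ⊆ Y₀ be normed spaces, 0 < α ≤ 1, and suppose T : Xᵢ → Yᵢ is globally α-Hölderian with constant Mᵢ for i = 0, 1. Then for all a ∈ X₀, b ∈ X₁ and t > 0, K(Ta − Tb, t^α; Y₀, Y₁) ≤ 2 max(M₀, M₁) [K(a − b, t; X₀, X₁)]^α. -/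
open Real

lemma Kfunc_bddBelow {X₀ X₁ : Type*} [NormedAddCommGroup X₀] [NormedAddCommGroup X₁]
    (j : X₁ →+ X₀) (a : X₀) {t : ℝ} (ht : 0 ≤ t) :
    BddBelow {r : ℝ | ∃ a₁ : X₁, r = ‖a - j a₁‖ + t * ‖a₁‖} := by
  refine ⟨0, fun r ⟨x, hx⟩ => ?_⟩
  rw [hx]; positivity

lemma Kfunc_le {X₀ X₁ : Type*} [NormedAddCommGroup X₀] [NormedAddCommGroup X₁]
    (j : X₁ →+ X₀) (a : X₀) {t : ℝ} (ht : 0 ≤ t) (a₁ : X₁) :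
    Kfunc j a t ≤ ‖a - j a₁‖ + t * ‖a₁‖ :=
  csInf_le (Kfunc_bddBelow j a ht) ⟨a₁, rfl⟩

lemma Kfunc_nonneg {X₀ X₁ : Type*} [NormedAddCommGroup X₀] [NormedAddCommGroup X₁]
    (j : X₁ →+ X₀) (a : X₀) {t : ℝ} (ht : 0 ≤ t) :
    0 ≤ Kfunc j a t := by
  apply Real.sInf_nonneg
  rintro r ⟨x, hx⟩
  rw [hx]; positivity

lemma Kfunc_zero {X₀ X₁ : Type*} [NormedAddCommGroup X₀] [NormedAddCommGroup X₁]
    (j : X₁ →+ X₀) {t : ℝ} (ht : 0 ≤ t) :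
    Kfunc j (0 : X₀) t = 0 := by
  refine le_antisymm ?_ (Kfunc_nonneg j 0 ht)
  simpa using Kfunc_le j (0 : X₀) ht 0

/-- If `T` is globally α-Hölderian from `Xᵢ` to `Yᵢ` with constant `Mᵢ` for
`i = 0,1`, then `K(Ta − Tb, t^α) ≤ 2 max(M₀,M₁) K(a − b, t)^α` for all
`a ∈ X₀`, `b ∈ X₁`, `t > 0`. -/
theorem Kfunc_sub_estimate_of_holder
    {X₀ X₁ Y₀ Y₁ : Type*}
    [NormedAddCommGroup X₀] [NormedAddCommGroup X₁]
    [NormedAddCommGroup Y₀] [NormedAddCommGroup Y₁]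
    (jX : X₁ →+ X₀) (jY : Y₁ →+ Y₀)
    (α : ℝ) (hα0 : 0 < α) (hα1 : α ≤ 1)
    (T₀ : X₀ → Y₀) (T₁ : X₁ → Y₁)
    (hcompat : ∀ a : X₁, jY (T₁ a) = T₀ (jX a))
    (M₀ M₁ : ℝ)
    (h0 : ∀ a b : X₀, ‖T₀ a - T₀ b‖ ≤ M₀ * ‖a - b‖ ^ α)
    (h1 : ∀ a b : X₁, ‖T₁ a - T₁ b‖ ≤ M₁ * ‖a - b‖ ^ α) :
    ∀ (a : X₀) (b : X₁) (t : ℝ), 0 < t →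
      Kfunc jY (T₀ a - T₀ (jX b)) (t ^ α) ≤
        2 * max M₀ M₁ * (Kfunc jX (a - jX b) t) ^ α := by
  intro a b t ht
  have ht' : (0:ℝ) ≤ t := ht.le
  have htα : (0:ℝ) < t ^ α := Real.rpow_pos_of_pos ht α
  by_cases hab : a = jX b
  · rw [hab]
    simp only [sub_self]
    rw [Kfunc_zero jY htα.le, Kfunc_zero jX ht', Real.zero_rpow hα0.ne', mul_zero]
  · have hxb : (0:ℝ) < ‖a - jX b‖ ^ α :=
      Real.rpow_pos_of_pos (norm_pos_iff.mpr (sub_ne_zero.mpr hab)) α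
    have hM0 : 0 ≤ M₀ :=
      (mul_nonneg_iff_of_pos_right hxb).mp ((norm_nonneg _).trans (h0 a (jX b)))
    have hM : 0 ≤ max M₀ M₁ := hM0.trans (le_max_left _ _)
    set S : Set ℝ := {r : ℝ | ∃ a₁ : X₁, r = ‖(a - jX b) - jX a₁‖ + t * ‖a₁‖} with hS
    have hSne : S.Nonempty := ⟨_, 0, rfl⟩
    have hSbdd : BddBelow S := Kfunc_bddBelow jX (a - jX b) ht'
    have key : ∀ r ∈ S,
        Kfunc jY (T₀ a - T₀ (jX b)) (t ^ α) ≤ 2 * max M₀ M₁ * r ^ α := by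
      rintro r ⟨c, rfl⟩
      set x := ‖(a - jX b) - jX c‖ with hxdef
      set y := ‖c‖ with hydef
      have hx0 : 0 ≤ x := norm_nonneg _
      have hy0 : 0 ≤ y := norm_nonneg _
      have step1 : Kfunc jY (T₀ a - T₀ (jX b)) (t ^ α)
          ≤ ‖T₀ a - T₀ (jX (c + b))‖ + t ^ α * ‖T₁ (c + b) - T₁ b‖ := by
        have h := Kfunc_le jY (T₀ a - T₀ (jX b)) htα.le (T₁ (c + b) - T₁ b)
        have hj : jY (T₁ (c + b) - T₁ b) = T₀ (jX (c + b)) - T₀ (jX b) := by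
          rw [map_sub, hcompat, hcompat]
        rw [hj] at h
        convert h using 3
        abel
      have step2 : ‖T₀ a - T₀ (jX (c + b))‖ ≤ M₀ * x ^ α := by
        have h := h0 a (jX (c + b))
        have hax : ‖a - jX (c + b)‖ = x := by
          rw [hxdef, map_add]; congr 1; abel
        rwa [hax] at h
      have step3 : ‖T₁ (c + b) - T₁ b‖ ≤ M₁ * y ^ α := by
        simpa using h1 (c + b) b
      have e3 : t ^ α * y ^ α = (t * y) ^ α := (Real.mul_rpow ht' hy0).symm
      have hxα : 0 ≤ x ^ α := Real.rpow_nonneg hx0 α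
      have htyα : 0 ≤ (t * y) ^ α := Real.rpow_nonneg (by positivity) α
      have e1 : x ^ α ≤ (x + t * y) ^ α :=
        Real.rpow_le_rpow hx0 (le_add_of_nonneg_right (by positivity)) hα0.le
      have e2 : (t * y) ^ α ≤ (x + t * y) ^ α :=
        Real.rpow_le_rpow (by positivity) (le_add_of_nonneg_left hx0) hα0.le
      calc Kfunc jY (T₀ a - T₀ (jX b)) (t ^ α)
          ≤ ‖T₀ a - T₀ (jX (c + b))‖ + t ^ α * ‖T₁ (c + b) - T₁ b‖ := step1
        _ ≤ M₀ * x ^ α + t ^ α * (M₁ * y ^ α) :=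
            add_le_add step2 (mul_le_mul_of_nonneg_left step3 htα.le)
        _ = M₀ * x ^ α + M₁ * (t ^ α * y ^ α) := by ring
        _ = M₀ * x ^ α + M₁ * (t * y) ^ α := by rw [e3]
        _ ≤ max M₀ M₁ * x ^ α + max M₀ M₁ * (t * y) ^ α :=
            add_le_add (mul_le_mul_of_nonneg_right (le_max_left _ _) hxα)
              (mul_le_mul_of_nonneg_right (le_max_right _ _) htyα)
        _ = max M₀ M₁ * (x ^ α + (t * y) ^ α) := by ring
        _ ≤ max M₀ M₁ * ((x + t * y) ^ α + (x + t * y) ^ α) :=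
            mul_le_mul_of_nonneg_left (add_le_add e1 e2) hM
        _ = 2 * max M₀ M₁ * (x + t * y) ^ α := by ring
    set K := Kfunc jX (a - jX b) t with hK
    have hKS : K = sInf S := rfl
    have hK0 : 0 ≤ K := Kfunc_nonneg jX (a - jX b) ht'
    have hlt : ∀ s, K < s →
        Kfunc jY (T₀ a - T₀ (jX b)) (t ^ α) ≤ 2 * max M₀ M₁ * s ^ α := by
      intro s hs
      rw [hKS] at hs
      obtain ⟨r, hrS, hrs⟩ := (csInf_lt_iff hSbdd hSne).mp hs
      have hr0 : 0 ≤ r := by obtain ⟨c, rfl⟩ := hrS; positivity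
      refine (key r hrS).trans ?_
      exact mul_le_mul_of_nonneg_left (Real.rpow_le_rpow hr0 hrs.le hα0.le)
        (by positivity)
    have tends : Filter.Tendsto (fun s : ℝ => 2 * max M₀ M₁ * s ^ α)
        (nhdsWithin K (Set.Ioi K)) (nhds (2 * max M₀ M₁ * K ^ α)) :=
      Filter.Tendsto.mono_left
        (continuousAt_const.mul (Real.continuousAt_rpow_const K α (Or.inr hα0.le)))
        nhdsWithin_le_nhds
    exact ge_of_tendsto tends
      (eventually_nhdsWithin_of_forall (fun s hs => hlt s hs))
end
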